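/- Let p > 2 be a real number and n a positive natural number. There exists a constant c > 0 (depending only on p) such that for all vectors a, b in ℝⁿ, | |a|^{p-2} a − |b|^{p-2} b | ≤ c (|a|^{p-2} + |b|^{p-2}) |a − b|. -/
import Mathlib

open Real

/-- Scalar key inequality: for `0 < q` and `0 ≤ y ≤ x`,
`y * (x^q - y^q) ≤ (q+1) * x^q * (x - y)`. -/
lemma pLaplace_scalar_key (q : ℝ) (hq : 0 < q) {x y : ℝ} (hy : 0 ≤ y) (hxy : y ≤ x) :
    y * (x ^ q - y ^ q) ≤ (q + 1) * x ^ q * (x - y) := by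
  have hx : 0 ≤ x := hy.trans hxy
  have hxq : (0:ℝ) ≤ x ^ q := rpow_nonneg hx q
  have hyq : (0:ℝ) ≤ y ^ q := rpow_nonneg hy q
  rcases le_or_gt q 1 with hq1 | hq1
  · -- case q ≤ 1 : y * x^q ≤ x * y^q
    have key : y * x ^ q ≤ x * y ^ q := by
      rcases eq_or_lt_of_le hy with rfl | hy0
      · simp [Real.zero_rpow hq.ne']
      have hx0 : 0 < x := lt_of_lt_of_le hy0 hxy
      have h1 : x ^ (q - 1) ≤ y ^ (q - 1) :=
        Real.rpow_le_rpow_of_nonpos hy0 hxy (by linarith)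
      have hx1 : x ^ (q - 1) = x ^ q / x := by
        rw [Real.rpow_sub hx0, Real.rpow_one]
      have hy1 : y ^ (q - 1) = y ^ q / y := by
        rw [Real.rpow_sub hy0, Real.rpow_one]
      rw [hx1, hy1, div_le_div_iff₀ hx0 hy0] at h1
      linarith [h1]
    have h2 : y ^ q * (x - y) ≤ x ^ q * (x - y) := by
      apply mul_le_mul_of_nonneg_right _ (by linarith)
      exact Real.rpow_le_rpow hy hxy hq.le
    nlinarith [mul_nonneg hyq (sub_nonneg.mpr hxy)]
  · -- case 1 < q : Bernoulli
    rcases eq_or_lt_of_le hx with rfl | hx0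
    · have : y = 0 := le_antisymm hxy hy
      simp [this]
    have hx0 : 0 < x := hx0
    have hs : -1 ≤ y / x - 1 := by
      have : 0 ≤ y / x := div_nonneg hy hx0.le
      linarith
    have hb := one_add_mul_self_le_rpow_one_add hs hq1.le
    rw [add_sub_cancel] at hb
    have hdiv : (y / x) ^ q = y ^ q / x ^ q := Real.div_rpow hy hx0.le q
    rw [hdiv] at hb
    -- hb : 1 + q * (y/x - 1) ≤ y^q / x^q
    have hb2 : x ^ q * (1 + q * (y / x - 1)) ≤ y ^ q := by
      have hxqpos : 0 < x ^ q := rpow_pos_of_pos hx0 q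
      calc x ^ q * (1 + q * (y / x - 1)) ≤ x ^ q * (y ^ q / x ^ q) :=
            mul_le_mul_of_nonneg_left hb hxqpos.le
        _ = y ^ q := by field_simp
    -- so x^q - y^q ≤ q * x^q * (1 - y/x) = q * x^{q-1} (x - y)
    have key : x ^ q - y ^ q ≤ q * x ^ q * ((x - y) / x) := by
      have : x ^ q * (1 + q * (y / x - 1)) = x ^ q - q * x ^ q * ((x - y) / x) := by
        field_simp; ring
      linarith [hb2, this ▸ hb2]
    have hxy' : 0 ≤ x - y := sub_nonneg.mpr hxy
    have key2 : y * (x ^ q - y ^ q) ≤ q * x ^ q * (x - y) := by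
      calc y * (x ^ q - y ^ q) ≤ x * (x ^ q - y ^ q) := by
            apply mul_le_mul_of_nonneg_right hxy
            exact sub_nonneg.mpr (Real.rpow_le_rpow hy hxy hq.le)
        _ ≤ x * (q * x ^ q * ((x - y) / x)) :=
            mul_le_mul_of_nonneg_left key hx0.le
        _ = q * x ^ q * (x - y) := by field_simp
    nlinarith [mul_nonneg hxq hxy']

/-- Vector key inequality in any real normed space, assuming `‖b‖ ≤ ‖a‖`. -/
lemma pLaplace_vec_key {E : Type*} [NormedAddCommGroup E] [NormedSpace ℝ E]
    (q : ℝ) (hq : 0 < q) (a b : E) (h : ‖b‖ ≤ ‖a‖) :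
    ‖‖a‖ ^ q • a - ‖b‖ ^ q • b‖ ≤ (q + 2) * (‖a‖ ^ q + ‖b‖ ^ q) * ‖a - b‖ := by
  have hb0 : (0:ℝ) ≤ ‖b‖ := norm_nonneg b
  have haq : (0:ℝ) ≤ ‖a‖ ^ q := rpow_nonneg (norm_nonneg a) q
  have hbq : (0:ℝ) ≤ ‖b‖ ^ q := rpow_nonneg hb0 q
  have habq : ‖b‖ ^ q ≤ ‖a‖ ^ q := Real.rpow_le_rpow hb0 h hq.le
  have hdecomp : ‖a‖ ^ q • a - ‖b‖ ^ q • b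
      = ‖a‖ ^ q • (a - b) + (‖a‖ ^ q - ‖b‖ ^ q) • b := by
    rw [smul_sub, sub_smul]; abel
  have hnorm : ‖‖a‖ ^ q • a - ‖b‖ ^ q • b‖
      ≤ ‖a‖ ^ q * ‖a - b‖ + (‖a‖ ^ q - ‖b‖ ^ q) * ‖b‖ := by
    rw [hdecomp]
    refine (norm_add_le _ _).trans ?_
    rw [norm_smul, norm_smul]
    simp only [Real.norm_eq_abs, abs_of_nonneg haq, abs_of_nonneg (sub_nonneg.mpr habq)]
    exact le_rfl
  have hkey : ‖b‖ * (‖a‖ ^ q - ‖b‖ ^ q) ≤ (q + 1) * ‖a‖ ^ q * (‖a‖ - ‖b‖) :=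
    pLaplace_scalar_key q hq hb0 h
  have hnn : ‖a‖ - ‖b‖ ≤ ‖a - b‖ := norm_sub_norm_le a b
  have hab : (0:ℝ) ≤ ‖a - b‖ := norm_nonneg _
  have h2 : (q + 1) * ‖a‖ ^ q * (‖a‖ - ‖b‖) ≤ (q + 1) * ‖a‖ ^ q * ‖a - b‖ := by
    apply mul_le_mul_of_nonneg_left hnn
    positivity
  nlinarith [mul_nonneg haq hab, mul_nonneg hbq hab]

theorem pLaplace_lipschitz (p : ℝ) (hp : 2 < p) :
    ∃ c : ℝ, 0 < c ∧ ∀ (n : ℕ), 0 < n → ∀ a b : EuclideanSpace ℝ (Fin n),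
      ‖‖a‖ ^ (p - 2) • a - ‖b‖ ^ (p - 2) • b‖ ≤
        c * (‖a‖ ^ (p - 2) + ‖b‖ ^ (p - 2)) * ‖a - b‖ := by
  refine ⟨p, by linarith, fun n _ a b => ?_⟩
  have hq : 0 < p - 2 := by linarith
  have hq2 : p - 2 + 2 = p := by ring
  rcases le_total ‖b‖ ‖a‖ with h | h
  · have := pLaplace_vec_key (p - 2) hq a b h
    rwa [hq2] at this
  · have := pLaplace_vec_key (p - 2) hq b a h
    rw [hq2, norm_sub_rev b a] at this
    rw [norm_sub_rev]
    calc ‖‖b‖ ^ (p - 2) • b - ‖a‖ ^ (p - 2) • a‖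
        ≤ p * (‖b‖ ^ (p - 2) + ‖a‖ ^ (p - 2)) * ‖a - b‖ := this
      _ = p * (‖a‖ ^ (p - 2) + ‖b‖ ^ (p - 2)) * ‖a - b‖ := by ring
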